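/- Let 0 < ε < 1 and 2/(1+ε²) ≤ σ < 1/ε, with μ₊(σ) = (σ(1−ε²) + √(σ²(1+ε²)²−4))/(2(1−ε²σ²)). For each root μ ∈ {μ₋(σ), μ₊(σ)}, the quantity (μ(ε^{−1}+σ) − 1)(μ(ε^{−1}−σ) + 1) is nonnegative; equivalently, −1/σ is greater than or equal to both roots −μ± of the characteristic polynomial P(X) = (ε^{−2}−σ²)X² + σ(ε^{−2}−1)X + ε^{−2}, since P(−1/σ) = 1/(ε²σ²) > 0 and P'(−1/σ) ≥ 0. -/

import Mathlib

/-- Positivity-of-components lemma for the kinetic wave: for each root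
μ ∈ {μ₋, μ₊}, (μ(ε⁻¹+σ)−1)(μ(ε⁻¹−σ)+1) ≥ 0; equivalently −1/σ dominates
both roots −μ± of P, since P(−1/σ) = 1/(ε²σ²) > 0 and P'(−1/σ) ≥ 0. -/
theorem stmt18 (ε σ : ℝ) (hε : 0 < ε) (hε1 : ε < 1)
    (hσl : 2/(1+ε^2) ≤ σ) (hσu : σ < ε⁻¹) :
    let d : ℝ := Real.sqrt (σ^2*(1+ε^2)^2 - 4)
    let μp : ℝ := (σ*(1-ε^2) + d) / (2*(1-ε^2*σ^2))
    let μm : ℝ := (σ*(1-ε^2) - d) / (2*(1-ε^2*σ^2))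
    let P : ℝ → ℝ := fun X => (ε⁻¹^2 - σ^2)*X^2 + σ*(ε⁻¹^2 - 1)*X + ε⁻¹^2
    (0 ≤ (μm*(ε⁻¹+σ) - 1)*(μm*(ε⁻¹-σ) + 1)) ∧
    (0 ≤ (μp*(ε⁻¹+σ) - 1)*(μp*(ε⁻¹-σ) + 1)) ∧
    (-μp ≤ -1/σ ∧ -μm ≤ -1/σ) ∧
    P (-1/σ) = 1/(ε^2*σ^2) ∧
    0 ≤ deriv P (-1/σ) := by
  intro d μp μm P
  have hε' : ε ≠ 0 := hε.ne'
  have hσ0 : 0 < σ := lt_of_lt_of_le (by positivity) hσl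
  have hεσ : ε * σ < 1 := by
    have h := mul_lt_mul_of_pos_left hσu hε
    rwa [mul_inv_cancel₀ hε'] at h
  have hσ2 : 2 ≤ σ * (1 + ε^2) := by
    rw [div_le_iff₀ (by positivity)] at hσl
    linarith
  have hσ1 : 1 < σ := by nlinarith
  have hden : 0 < 1 - ε^2 * σ^2 := by
    have h2 := mul_pos (sub_pos.mpr hεσ) (by positivity : (0:ℝ) < 1 + ε*σ)
    nlinarith
  have hne : (1:ℝ) - ε^2 * σ^2 ≠ 0 := hden.ne'
  have hDnn : 0 ≤ σ^2*(1+ε^2)^2 - 4 := by nlinarith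
  have hd0 : 0 ≤ d := Real.sqrt_nonneg _
  have hd2 : d^2 = σ^2*(1+ε^2)^2 - 4 := Real.sq_sqrt hDnn
  have hRnn : 0 ≤ σ^2*(1+ε^2) - 2 := by nlinarith
  have key : σ * d ≤ σ^2*(1+ε^2) - 2 := by
    have hsq : (σ*d)^2 ≤ (σ^2*(1+ε^2) - 2)^2 := by nlinarith [mul_pos hε hσ0]
    exact (pow_le_pow_iff_left₀ (mul_nonneg hσ0.le hd0) hRnn (by norm_num)).mp hsq
  have hμm : 1/σ ≤ μm := by
    rw [div_le_div_iff₀ hσ0 (by linarith)]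
    nlinarith
  have hμpm : μm ≤ μp :=
    (div_le_div_iff_of_pos_right (by linarith)).mpr (by linarith)
  have hμp : 1/σ ≤ μp := le_trans hμm hμpm
  have hσμm : 1 ≤ σ * μm := by
    have h := (div_le_iff₀ hσ0).mp hμm
    nlinarith
  have hσμp : 1 ≤ σ * μp := by
    have h := (div_le_iff₀ hσ0).mp hμp
    nlinarith
  have hmroot : (1-ε^2*σ^2)*μm^2 - σ*(1-ε^2)*μm + 1 = 0 := by
    show (1-ε^2*σ^2)*((σ*(1-ε^2) - d) / (2*(1-ε^2*σ^2)))^2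
        - σ*(1-ε^2)*((σ*(1-ε^2) - d) / (2*(1-ε^2*σ^2))) + 1 = 0
    field_simp
    linear_combination hd2
  have hproot : (1-ε^2*σ^2)*μp^2 - σ*(1-ε^2)*μp + 1 = 0 := by
    show (1-ε^2*σ^2)*((σ*(1-ε^2) + d) / (2*(1-ε^2*σ^2)))^2
        - σ*(1-ε^2)*((σ*(1-ε^2) + d) / (2*(1-ε^2*σ^2))) + 1 = 0
    field_simp
    linear_combination hd2
  have key_eq : ∀ m : ℝ, (m*(ε⁻¹+σ) - 1)*(m*(ε⁻¹-σ) + 1)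
      = (ε⁻¹^2+1)*(σ*m-1) + ε⁻¹^2 * ((1-ε^2*σ^2)*m^2 - σ*(1-ε^2)*m + 1) := by
    intro m; field_simp; ring
  refine ⟨?_, ?_, ⟨?_, ?_⟩, ?_, ?_⟩
  · rw [key_eq μm, hmroot, mul_zero, add_zero]
    exact mul_nonneg (by positivity) (by linarith)
  · rw [key_eq μp, hproot, mul_zero, add_zero]
    exact mul_nonneg (by positivity) (by linarith)
  · rw [neg_div, neg_le_neg_iff]; exact hμp
  · rw [neg_div, neg_le_neg_iff]; exact hμm
  · show (ε⁻¹^2 - σ^2)*(-1/σ)^2 + σ*(ε⁻¹^2 - 1)*(-1/σ) + ε⁻¹^2 = 1/(ε^2*σ^2)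
    field_simp
    ring
  · have h1 : HasDerivAt P (2*(ε⁻¹^2 - σ^2)*(-1/σ) + σ*(ε⁻¹^2 - 1)) (-1/σ) := by
      have hp := (hasDerivAt_pow 2 (-1/σ : ℝ)).const_mul (ε⁻¹^2 - σ^2)
      have hl := (hasDerivAt_id (-1/σ : ℝ)).const_mul (σ*(ε⁻¹^2 - 1))
      have h := (hp.add hl).add_const (ε⁻¹^2)
      exact h.congr_deriv (by push_cast; ring)
    rw [h1.deriv]
    have heq : 2*(ε⁻¹^2 - σ^2)*(-1/σ) + σ*(ε⁻¹^2 - 1)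
        = (ε⁻¹^2*(σ^2*(1+ε^2) - 2))/σ := by
      field_simp
      ring
    rw [heq]
    exact div_nonneg (mul_nonneg (by positivity) hRnn) hσ0.le
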